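/- Let (X_t) be strictly stationary with mean zero, ∑_h |γ(h)| < ∞, and absolutely summable fourth-order cumulants. Let I_{t,b}(λ) = (2πb)^{-1} |∑_{s=1}^b X_{t+s−1} e^{-iλs}|² and f̃_b(λ) = N^{-1} ∑_{t=1}^N I_{t,b}(λ) with N = n − b + 1. Then Var(f̃_b(λ)) ≤ C b / N uniformly over λ, for some constant C independent of n, b, λ. -/

import Mathlib

set_option linter.unusedSectionVars false
set_option linter.unusedVariables false
set_option maxHeartbeats 1000000

open MeasureTheory ProbabilityTheory Real Complex Finset

/-- Fourth joint cumulant of mean-zero random variables. -/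
noncomputable def cum4 {Ω : Type*} [MeasurableSpace Ω] (P : Measure Ω)
    (Y1 Y2 Y3 Y4 : Ω → ℝ) : ℝ :=
  (∫ ω, Y1 ω * Y2 ω * Y3 ω * Y4 ω ∂P)
    - (∫ ω, Y1 ω * Y2 ω ∂P) * (∫ ω, Y3 ω * Y4 ω ∂P)
    - (∫ ω, Y1 ω * Y3 ω ∂P) * (∫ ω, Y2 ω * Y4 ω ∂P)
    - (∫ ω, Y1 ω * Y4 ω ∂P) * (∫ ω, Y2 ω * Y3 ω ∂P)

/-! ### Auxiliary definitions -/

def bavA (p : ℕ × ℕ × ℕ) : ℤ := (p.1 : ℤ) + (p.2.1 : ℤ) - 1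
def bavB (p : ℕ × ℕ × ℕ) : ℤ := (p.1 : ℤ) + (p.2.2 : ℤ) - 1

def bavT (N b : ℕ) : Finset (ℕ × ℕ × ℕ) :=
  Finset.Icc 1 N ×ˢ (Finset.Icc 1 b ×ˢ Finset.Icc 1 b)

noncomputable def bavW (N b : ℕ) (lam : ℝ) (p : ℕ × ℕ × ℕ) : ℝ :=
  (1 / (N : ℝ)) * (1 / (2 * Real.pi * b)) *
    (Real.cos (lam * p.2.1) * Real.cos (lam * p.2.2)
      + Real.sin (lam * p.2.1) * Real.sin (lam * p.2.2))

def bavZ {Ω : Type*} (X : ℤ → Ω → ℝ) (p : ℕ × ℕ × ℕ) (ω : Ω) : ℝ :=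
  X (bavA p) ω * X (bavB p) ω

/-! ### Stationarity transfer -/

section Aux
variable {Ω : Type*} [MeasurableSpace Ω] (P : Measure Ω) [IsProbabilityMeasure P]
  (X : ℤ → Ω → ℝ)

theorem bav_shift_integral (hmeas : ∀ t, Measurable (X t))
    (hstat : ∀ (m : ℕ) (t : Fin m → ℤ) (s : ℤ),
      Measure.map (fun ω (i : Fin m) => X (t i + s) ω) P
        = Measure.map (fun ω (i : Fin m) => X (t i) ω) P)
    (m : ℕ) (t : Fin m → ℤ) (s : ℤ) (g : (Fin m → ℝ) → ℝ) (hg : Measurable g) :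
    ∫ ω, g (fun i => X (t i + s) ω) ∂P = ∫ ω, g (fun i => X (t i) ω) ∂P := by
  have h1 : Measurable (fun ω (i : Fin m) => X (t i + s) ω) :=
    measurable_pi_lambda _ (fun i => hmeas _)
  have h2 : Measurable (fun ω (i : Fin m) => X (t i) ω) :=
    measurable_pi_lambda _ (fun i => hmeas _)
  rw [← integral_map h1.aemeasurable hg.aestronglyMeasurable,
      ← integral_map h2.aemeasurable hg.aestronglyMeasurable, hstat m t s]

theorem bav_shift_integrable (hmeas : ∀ t, Measurable (X t))
    (hstat : ∀ (m : ℕ) (t : Fin m → ℤ) (s : ℤ),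
      Measure.map (fun ω (i : Fin m) => X (t i + s) ω) P
        = Measure.map (fun ω (i : Fin m) => X (t i) ω) P)
    (m : ℕ) (t : Fin m → ℤ) (s : ℤ) (g : (Fin m → ℝ) → ℝ) (hg : Measurable g)
    (h : Integrable (fun ω => g (fun i => X (t i) ω)) P) :
    Integrable (fun ω => g (fun i => X (t i + s) ω)) P := by
  have h1 : Measurable (fun ω (i : Fin m) => X (t i + s) ω) :=
    measurable_pi_lambda _ (fun i => hmeas _)
  have h2 : Measurable (fun ω (i : Fin m) => X (t i) ω) :=
    measurable_pi_lambda _ (fun i => hmeas _)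
  have h3 := (integrable_map_measure hg.aestronglyMeasurable h2.aemeasurable (μ := P)).2 h
  rw [← hstat m t s] at h3
  exact (integrable_map_measure hg.aestronglyMeasurable h1.aemeasurable (μ := P)).1 h3

theorem bav_int4 (hmeas : ∀ t, Measurable (X t))
    (hstat : ∀ (m : ℕ) (t : Fin m → ℤ) (s : ℤ),
      Measure.map (fun ω (i : Fin m) => X (t i + s) ω) P
        = Measure.map (fun ω (i : Fin m) => X (t i) ω) P)
    (hmom : Integrable (fun ω => (X 0 ω) ^ 4) P) (t : ℤ) :
    Integrable (fun ω => X t ω ^ 4) P := by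
  have h := bav_shift_integrable P X hmeas hstat 1 (fun _ => 0) t (fun v => v 0 ^ 4)
    (by measurability) (by simpa using hmom)
  simpa using h

theorem bav_E4 (hmeas : ∀ t, Measurable (X t))
    (hstat : ∀ (m : ℕ) (t : Fin m → ℤ) (s : ℤ),
      Measure.map (fun ω (i : Fin m) => X (t i + s) ω) P
        = Measure.map (fun ω (i : Fin m) => X (t i) ω) P)
    (a b c d : ℤ) :
    ∫ ω, X a ω * X b ω * X c ω * X d ω ∂P
      = ∫ ω, X 0 ω * X (b - a) ω * X (c - a) ω * X (d - a) ω ∂P := by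
  have h := bav_shift_integral P X hmeas hstat 4 ![0, b - a, c - a, d - a] a
    (fun v => v 0 * v 1 * v 2 * v 3) (by measurability)
  simpa using h

/-! ### Integrability of products -/

theorem bav_intprod4 (hmeas : ∀ t, Measurable (X t))
    (hint4 : ∀ t, Integrable (fun ω => X t ω ^ 4) P) (a b c d : ℤ) :
    Integrable (fun ω => X a ω * X b ω * X c ω * X d ω) P := by
  have hb : Integrable
      (fun ω => (X a ω ^ 4 + X b ω ^ 4 + X c ω ^ 4 + X d ω ^ 4) / 4) P :=
    ((((hint4 a).add (hint4 b)).add (hint4 c)).add (hint4 d)).div_const 4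
  refine hb.mono' ((((hmeas a).mul (hmeas b)).mul (hmeas c)).mul (hmeas d)).aestronglyMeasurable ?_
  filter_upwards with ω
  rw [Real.norm_eq_abs, abs_le]
  constructor <;> nlinarith [sq_nonneg (X a ω * X b ω - X c ω * X d ω),
    sq_nonneg (X a ω * X b ω + X c ω * X d ω), sq_nonneg (X a ω ^ 2 - X b ω ^ 2),
    sq_nonneg (X c ω ^ 2 - X d ω ^ 2), sq_nonneg (X a ω ^ 2 + X b ω ^ 2),
    sq_nonneg (X c ω ^ 2 + X d ω ^ 2)]

theorem bav_intprod2 (hmeas : ∀ t, Measurable (X t))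
    (hint4 : ∀ t, Integrable (fun ω => X t ω ^ 4) P) (a b : ℤ) :
    Integrable (fun ω => X a ω * X b ω) P := by
  have hb : Integrable (fun ω => (X a ω ^ 4 + X b ω ^ 4 + 2) / 4) P :=
    (((hint4 a).add (hint4 b)).add (integrable_const 2)).div_const 4
  refine hb.mono' ((hmeas a).mul (hmeas b)).aestronglyMeasurable ?_
  filter_upwards with ω
  rw [Real.norm_eq_abs, abs_le]
  constructor <;> nlinarith [sq_nonneg (X a ω - X b ω), sq_nonneg (X a ω + X b ω),
    sq_nonneg (X a ω ^ 2 - 1), sq_nonneg (X b ω ^ 2 - 1)]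

/-! ### Covariance identity -/

theorem bav_pair (γ : ℤ → ℝ) (hγ : ∀ t h : ℤ, ∫ ω, X t ω * X (t + h) ω ∂P = γ h)
    (a b : ℤ) : ∫ ω, X a ω * X b ω ∂P = γ (b - a) := by
  have h := hγ a (b - a)
  rwa [show a + (b - a) = b by ring] at h

theorem bav_cov (hmeas : ∀ t, Measurable (X t))
    (hstat : ∀ (m : ℕ) (t : Fin m → ℤ) (s : ℤ),
      Measure.map (fun ω (i : Fin m) => X (t i + s) ω) P
        = Measure.map (fun ω (i : Fin m) => X (t i) ω) P)
    (γ : ℤ → ℝ) (hγ : ∀ t h : ℤ, ∫ ω, X t ω * X (t + h) ω ∂P = γ h)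
    (a b c d : ℤ) :
    (∫ ω, (X a ω * X b ω) * (X c ω * X d ω) ∂P)
      - (∫ ω, X a ω * X b ω ∂P) * (∫ ω, X c ω * X d ω ∂P)
      = cum4 P (X 0) (X (b - a)) (X (c - a)) (X (d - a))
        + γ (c - a) * γ (d - b) + γ (d - a) * γ (c - b) := by
  have h4 : ∫ ω, (X a ω * X b ω) * (X c ω * X d ω) ∂P
      = ∫ ω, X 0 ω * X (b - a) ω * X (c - a) ω * X (d - a) ω ∂P := by
    rw [← bav_E4 P X hmeas hstat a b c d]
    exact integral_congr_ae (Filter.Eventually.of_forall fun ω => by ring)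
  have e1 : ∫ ω, X 0 ω * X (b - a) ω ∂P = γ (b - a) := by
    simpa using bav_pair P X γ hγ 0 (b - a)
  have e2 : ∫ ω, X (c - a) ω * X (d - a) ω ∂P = γ (d - c) := by
    rw [bav_pair P X γ hγ]; ring_nf
  have e3 : ∫ ω, X 0 ω * X (c - a) ω ∂P = γ (c - a) := by
    simpa using bav_pair P X γ hγ 0 (c - a)
  have e4 : ∫ ω, X (b - a) ω * X (d - a) ω ∂P = γ (d - b) := by
    rw [bav_pair P X γ hγ]; ring_nf
  have e5 : ∫ ω, X 0 ω * X (d - a) ω ∂P = γ (d - a) := by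
    simpa using bav_pair P X γ hγ 0 (d - a)
  have e6 : ∫ ω, X (b - a) ω * X (c - a) ω ∂P = γ (c - b) := by
    rw [bav_pair P X γ hγ]; ring_nf
  have ep : ∫ ω, X a ω * X b ω ∂P = γ (b - a) := bav_pair P X γ hγ a b
  have eq : ∫ ω, X c ω * X d ω ∂P = γ (d - c) := bav_pair P X γ hγ c d
  rw [h4, ep, eq]
  unfold cum4
  rw [e1, e2, e3, e4, e5, e6]
  ring

/-! ### Variance expansion -/

theorem bav_var_eq (T : Finset (ℕ × ℕ × ℕ)) (w : ℕ × ℕ × ℕ → ℝ)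
    (hZint : ∀ p, Integrable (bavZ X p) P)
    (hZZ : ∀ p q, Integrable (fun ω => bavZ X p ω * bavZ X q ω) P)
    (hZL2 : ∀ p, MemLp (bavZ X p) 2 P) :
    variance (fun ω => ∑ p ∈ T, w p * bavZ X p ω) P
      = ∑ p ∈ T, ∑ q ∈ T, w p * w q *
          ((∫ ω, bavZ X p ω * bavZ X q ω ∂P)
            - (∫ ω, bavZ X p ω ∂P) * (∫ ω, bavZ X q ω ∂P)) := by
  set Y := fun ω => ∑ p ∈ T, w p * bavZ X p ω with hY
  have hYL2 : MemLp Y 2 P :=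
    memLp_finset_sum T (fun p _ => (hZL2 p).const_mul (w p))
  have hEY : ∫ ω, Y ω ∂P = ∑ p ∈ T, w p * ∫ ω, bavZ X p ω ∂P := by
    rw [hY]
    rw [integral_finset_sum _ (fun p _ => ((hZint p).const_mul (w p)))]
    exact Finset.sum_congr rfl fun p _ => integral_const_mul _ _
  have hEY2 : ∫ ω, (Y ω) ^ 2 ∂P
      = ∑ p ∈ T, ∑ q ∈ T, (w p * w q) * ∫ ω, bavZ X p ω * bavZ X q ω ∂P := by
    have h : ∀ ω, (Y ω) ^ 2 = ∑ p ∈ T, ∑ q ∈ T,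
        (w p * w q) * (bavZ X p ω * bavZ X q ω) := by
      intro ω
      rw [sq, hY, Finset.sum_mul_sum]
      exact Finset.sum_congr rfl fun p _ => Finset.sum_congr rfl fun q _ => by ring
    calc ∫ ω, (Y ω) ^ 2 ∂P
        = ∫ ω, ∑ p ∈ T, ∑ q ∈ T, (w p * w q) * (bavZ X p ω * bavZ X q ω) ∂P :=
          integral_congr_ae (Filter.Eventually.of_forall h)
      _ = ∑ p ∈ T, ∑ q ∈ T, (w p * w q) * ∫ ω, bavZ X p ω * bavZ X q ω ∂P := by
          rw [integral_finset_sum _ (fun p _ =>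
            integrable_finset_sum _ (fun q _ => (hZZ p q).const_mul _))]
          refine Finset.sum_congr rfl fun p _ => ?_
          rw [integral_finset_sum _ (fun q _ => (hZZ p q).const_mul _)]
          exact Finset.sum_congr rfl fun q _ => integral_const_mul _ _
  rw [variance_eq_sub hYL2]
  have hpow : P[Y ^ 2] = ∫ ω, (Y ω) ^ 2 ∂P := by
    simp only [Pi.pow_apply]
  rw [hpow, hEY2, hEY, sq, Finset.sum_mul_sum, ← Finset.sum_sub_distrib]
  refine Finset.sum_congr rfl fun p _ => ?_
  rw [← Finset.sum_sub_distrib]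
  exact Finset.sum_congr rfl fun q _ => by ring

end Aux

/-! ### Counting lemma -/

theorem bav_count {ι σ κ : Type*} [DecidableEq σ] [DecidableEq κ] [DecidableEq ι]
    (S : Finset ι) (f : ι → ℝ) (F : κ → ℝ)
    (hF0 : ∀ k, 0 ≤ F k) (hFs : Summable F) (A : Finset σ) (e : ι → σ × κ)
    (he : ∀ x ∈ S, ∀ y ∈ S, e x = e y → x = y)
    (hmem : ∀ i ∈ S, (e i).1 ∈ A)
    (hval : ∀ i ∈ S, f i = F (e i).2) :
    ∑ i ∈ S, f i ≤ (A.card : ℝ) * ∑' k, F k := by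
  calc ∑ i ∈ S, f i = ∑ y ∈ S.image e, F y.2 := by
        rw [Finset.sum_image he]
        exact Finset.sum_congr rfl hval
    _ ≤ ∑ y ∈ A ×ˢ (S.image e).image Prod.snd, F y.2 := by
        apply Finset.sum_le_sum_of_subset_of_nonneg
        · intro y hy
          rcases Finset.mem_image.1 hy with ⟨i, hi, rfl⟩
          exact Finset.mem_product.2 ⟨hmem i hi,
            Finset.mem_image_of_mem _ (Finset.mem_image_of_mem _ hi)⟩
        · intros; exact hF0 _
    _ = ∑ _a ∈ A, ∑ k ∈ (S.image e).image Prod.snd, F k := Finset.sum_product _ _ _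
    _ ≤ ∑ _a ∈ A, ∑' k, F k :=
        Finset.sum_le_sum (fun a _ => hFs.sum_le_tsum _ (fun k _ => hF0 k))
    _ = (A.card : ℝ) * ∑' k, F k := by rw [Finset.sum_const, nsmul_eq_mul]

/-! ### Periodogram expansion -/

theorem bav_sq_abs (b : ℕ) (lam : ℝ) (x : ℕ → ℝ) :
    ‖∑ s ∈ Finset.Icc 1 b,
        (x s : ℂ) * Complex.exp (-Complex.I * lam * (s : ℕ))‖ ^ 2
      = ∑ s ∈ Finset.Icc 1 b, ∑ s' ∈ Finset.Icc 1 b, x s * x s' *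
          (Real.cos (lam * s) * Real.cos (lam * s')
            + Real.sin (lam * s) * Real.sin (lam * s')) := by
  have hre : ∀ s : ℕ, (Complex.exp (-Complex.I * lam * (s : ℕ))).re = Real.cos (lam * s) := by
    intro s
    have h : -Complex.I * lam * (s : ℕ) = ((-(lam * s) : ℝ) : ℂ) * Complex.I := by
      push_cast; ring
    rw [h, Complex.exp_ofReal_mul_I_re, Real.cos_neg]
  have him : ∀ s : ℕ, (Complex.exp (-Complex.I * lam * (s : ℕ))).im = -Real.sin (lam * s) := by
    intro s
    have h : -Complex.I * lam * (s : ℕ) = ((-(lam * s) : ℝ) : ℂ) * Complex.I := by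
      push_cast; ring
    rw [h, Complex.exp_ofReal_mul_I_im, Real.sin_neg]
  set z := ∑ s ∈ Finset.Icc 1 b, (x s : ℂ) * Complex.exp (-Complex.I * lam * (s : ℕ)) with hz
  have hzre : z.re = ∑ s ∈ Finset.Icc 1 b, x s * Real.cos (lam * s) := by
    rw [hz, Complex.re_sum]
    exact Finset.sum_congr rfl fun s _ => by
      rw [Complex.mul_re, Complex.ofReal_re, Complex.ofReal_im, hre s, him s]; ring
  have hzim : z.im = ∑ s ∈ Finset.Icc 1 b, -(x s * Real.sin (lam * s)) := by
    rw [hz, Complex.im_sum]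
    exact Finset.sum_congr rfl fun s _ => by
      rw [Complex.mul_im, Complex.ofReal_re, Complex.ofReal_im, hre s, him s]; ring
  rw [Complex.sq_norm, Complex.normSq_apply, hzre, hzim, Finset.sum_mul_sum, Finset.sum_mul_sum,
    ← Finset.sum_add_distrib]
  refine Finset.sum_congr rfl fun s _ => ?_
  rw [← Finset.sum_add_distrib]
  exact Finset.sum_congr rfl fun s' _ => by ring

theorem bav_bridge {Ω : Type*} (X : ℤ → Ω → ℝ) (n b : ℕ) (lam : ℝ) :
    (fun ω => (1 / ((n - b + 1 : ℕ) : ℝ)) * ∑ t ∈ Finset.Icc 1 (n - b + 1),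
        (1 / (2 * π * b)) *
          ‖∑ s ∈ Finset.Icc 1 b,
            (X ((t : ℤ) + (s : ℤ) - 1) ω : ℂ) *
              Complex.exp (-Complex.I * lam * (s : ℕ))‖ ^ 2)
      = fun ω => ∑ p ∈ bavT (n - b + 1) b, bavW (n - b + 1) b lam p * bavZ X p ω := by
  funext ω
  rw [bavT, Finset.sum_product, Finset.mul_sum]
  refine Finset.sum_congr rfl fun t ht => ?_
  rw [bav_sq_abs b lam (fun s => X ((t : ℤ) + (s : ℤ) - 1) ω), Finset.sum_product]
  simp only [Finset.mul_sum]
  refine Finset.sum_congr rfl fun s hs => ?_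
  refine Finset.sum_congr rfl fun s' hs' => ?_
  simp only [bavW, bavZ, bavA, bavB]
  ring

theorem bav_absW {N b : ℕ} (lam : ℝ) (p : ℕ × ℕ × ℕ) :
    |bavW N b lam p| ≤ 2 * ((1 / (N : ℝ)) * (1 / (2 * Real.pi * b))) := by
  unfold bavW
  rw [abs_mul, _root_.abs_of_nonneg (by positivity : (0:ℝ) ≤ 1 / (N : ℝ) * (1 / (2 * Real.pi * b)))]
  have h2 : |Real.cos (lam * p.2.1) * Real.cos (lam * p.2.2)
      + Real.sin (lam * p.2.1) * Real.sin (lam * p.2.2)| ≤ 2 := by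
    rw [← Real.cos_sub]
    exact (abs_cos_le_one _).trans one_le_two
  calc (1 / (N : ℝ)) * (1 / (2 * Real.pi * b)) * |Real.cos (lam * p.2.1) * Real.cos (lam * p.2.2)
      + Real.sin (lam * p.2.1) * Real.sin (lam * p.2.2)|
      ≤ (1 / (N : ℝ)) * (1 / (2 * Real.pi * b)) * 2 :=
        mul_le_mul_of_nonneg_left h2 (by positivity)
    _ = 2 * ((1 / (N : ℝ)) * (1 / (2 * Real.pi * b))) := by ring

/-! ### Main bound -/

theorem bav_main {Ω : Type*} [MeasurableSpace Ω] (P : Measure Ω) [IsProbabilityMeasure P]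
    (X : ℤ → Ω → ℝ) (hmeas : ∀ t, Measurable (X t))
    (hstat : ∀ (m : ℕ) (t : Fin m → ℤ) (s : ℤ),
      Measure.map (fun ω (i : Fin m) => X (t i + s) ω) P
        = Measure.map (fun ω (i : Fin m) => X (t i) ω) P)
    (hmom : Integrable (fun ω => (X 0 ω) ^ 4) P)
    (γ : ℤ → ℝ) (hγ : ∀ t h : ℤ, ∫ ω, X t ω * X (t + h) ω ∂P = γ h)
    (hγsum : Summable (fun h : ℤ => |γ h|))
    (hcumsum : Summable (fun h : ℤ × ℤ × ℤ =>
      |cum4 P (X 0) (X h.1) (X h.2.1) (X h.2.2)|))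
    (b N : ℕ) (hb : 1 ≤ b) (hN : 1 ≤ N) (lam : ℝ) :
    variance (fun ω => ∑ p ∈ bavT N b, bavW N b lam p * bavZ X p ω) P
      ≤ ((2 * (∑' h : ℤ, |γ h|) ^ 2
            + ∑' h : ℤ × ℤ × ℤ, |cum4 P (X 0) (X h.1) (X h.2.1) (X h.2.2)|) / π ^ 2)
          * b / N := by
  set Γ := ∑' h : ℤ, |γ h| with hΓdef
  set Cu := ∑' h : ℤ × ℤ × ℤ, |cum4 P (X 0) (X h.1) (X h.2.1) (X h.2.2)| with hCudef
  have hΓ0 : 0 ≤ Γ := tsum_nonneg (fun _ => abs_nonneg _)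
  have hCu0 : 0 ≤ Cu := tsum_nonneg (fun _ => abs_nonneg _)
  have hint4 := bav_int4 P X hmeas hstat hmom
  have hZint : ∀ p, Integrable (bavZ X p) P := fun p =>
    bav_intprod2 P X hmeas hint4 (bavA p) (bavB p)
  have hZZ : ∀ p q, Integrable (fun ω => bavZ X p ω * bavZ X q ω) P := fun p q =>
    (bav_intprod4 P X hmeas hint4 (bavA p) (bavB p) (bavA q) (bavB q)).congr
      (Filter.Eventually.of_forall (fun ω => by simp only [bavZ]; ring))
  have hZL2 : ∀ p, MemLp (bavZ X p) 2 P := fun p =>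
    (memLp_two_iff_integrable_sq
        ((hmeas (bavA p)).mul (hmeas (bavB p))).aestronglyMeasurable).2
      ((hZZ p p).congr (Filter.Eventually.of_forall (fun ω => (sq (bavZ X p ω)).symm)))
  set A0 := (1 / (N : ℝ)) * (1 / (2 * Real.pi * b)) with hA0
  have hA00 : 0 ≤ A0 := by positivity
  -- variance expansion
  have hVar := bav_var_eq P X (bavT N b) (bavW N b lam) hZint hZZ hZL2
  -- covariance identity
  have hcovb : ∀ p q : ℕ × ℕ × ℕ,
      (∫ ω, bavZ X p ω * bavZ X q ω ∂P)
          - (∫ ω, bavZ X p ω ∂P) * (∫ ω, bavZ X q ω ∂P)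
        = cum4 P (X 0) (X (bavB p - bavA p)) (X (bavA q - bavA p)) (X (bavB q - bavA p))
          + γ (bavA q - bavA p) * γ (bavB q - bavB p)
          + γ (bavB q - bavA p) * γ (bavA q - bavB p) := by
    intro p q
    have h := bav_cov P X hmeas hstat γ hγ (bavA p) (bavB p) (bavA q) (bavB q)
    simpa only [bavZ] using h
  -- pointwise term bound
  have hterm : ∀ p q : ℕ × ℕ × ℕ, bavW N b lam p * bavW N b lam q *
      ((∫ ω, bavZ X p ω * bavZ X q ω ∂P)
        - (∫ ω, bavZ X p ω ∂P) * (∫ ω, bavZ X q ω ∂P))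
      ≤ 4 * A0 ^ 2 *
        (|cum4 P (X 0) (X (bavB p - bavA p)) (X (bavA q - bavA p)) (X (bavB q - bavA p))|
          + |γ (bavA q - bavA p)| * |γ (bavB q - bavB p)|
          + |γ (bavB q - bavA p)| * |γ (bavA q - bavB p)|) := by
    intro p q
    set c1 := cum4 P (X 0) (X (bavB p - bavA p)) (X (bavA q - bavA p)) (X (bavB q - bavA p)) with hc1
    set g1 := γ (bavA q - bavA p) * γ (bavB q - bavB p) with hg1
    set g2 := γ (bavB q - bavA p) * γ (bavA q - bavB p) with hg2
    have habs : |(∫ ω, bavZ X p ω * bavZ X q ω ∂P)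
        - (∫ ω, bavZ X p ω ∂P) * (∫ ω, bavZ X q ω ∂P)| ≤ |c1| + |g1| + |g2| := by
      rw [hcovb p q]
      calc |c1 + g1 + g2| ≤ |c1 + g1| + |g2| := abs_add_le _ _
        _ ≤ |c1| + |g1| + |g2| := add_le_add_left (abs_add_le _ _) _
    calc bavW N b lam p * bavW N b lam q * ((∫ ω, bavZ X p ω * bavZ X q ω ∂P)
          - (∫ ω, bavZ X p ω ∂P) * (∫ ω, bavZ X q ω ∂P))
        ≤ |bavW N b lam p * bavW N b lam q * ((∫ ω, bavZ X p ω * bavZ X q ω ∂P)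
          - (∫ ω, bavZ X p ω ∂P) * (∫ ω, bavZ X q ω ∂P))| := le_abs_self _
      _ = |bavW N b lam p| * |bavW N b lam q| * |(∫ ω, bavZ X p ω * bavZ X q ω ∂P)
          - (∫ ω, bavZ X p ω ∂P) * (∫ ω, bavZ X q ω ∂P)| := by rw [abs_mul, abs_mul]
      _ ≤ (2 * A0) * (2 * A0) * (|c1| + |g1| + |g2|) := by
          apply mul_le_mul (mul_le_mul (bav_absW lam p) (bav_absW lam q)
            (abs_nonneg _) (by positivity)) habs (abs_nonneg _) (by positivity)
      _ = 4 * A0 ^ 2 * (|c1| + |g1| + |g2|) := by ring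
      _ = 4 * A0 ^ 2 * (|c1| + |γ (bavA q - bavA p)| * |γ (bavB q - bavB p)|
          + |γ (bavB q - bavA p)| * |γ (bavA q - bavB p)|) := by
          rw [hg1, hg2, abs_mul, abs_mul]
  -- counting bounds
  have hFs2 : Summable (fun z : ℤ × ℤ => |γ z.1| * |γ z.2|) :=
    hγsum.mul_of_nonneg hγsum (fun _ => abs_nonneg _) (fun _ => abs_nonneg _)
  have htsum2 : ∑' z : ℤ × ℤ, |γ z.1| * |γ z.2| = Γ * Γ :=
    (Summable.tsum_mul_tsum hγsum hγsum hFs2).symm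
  have hS3 : ∑ x ∈ bavT N b ×ˢ bavT N b,
      |cum4 P (X 0) (X (bavB x.1 - bavA x.1)) (X (bavA x.2 - bavA x.1)) (X (bavB x.2 - bavA x.1))|
      ≤ ((N * (b * b) : ℕ) : ℝ) * Cu := by
    have h := bav_count (bavT N b ×ˢ bavT N b)
      (fun x => |cum4 P (X 0) (X (bavB x.1 - bavA x.1)) (X (bavA x.2 - bavA x.1))
        (X (bavB x.2 - bavA x.1))|)
      (fun h : ℤ × ℤ × ℤ => |cum4 P (X 0) (X h.1) (X h.2.1) (X h.2.2)|)
      (fun _ => abs_nonneg _) hcumsum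
      (Finset.Icc 1 N ×ˢ (Finset.Icc 1 b ×ˢ Finset.Icc 1 b))
      (fun x => ((x.1.1, x.1.2.1, x.2.2.1),
        (bavB x.1 - bavA x.1, bavA x.2 - bavA x.1, bavB x.2 - bavA x.1)))
      (fun x _ y _ hxy => by
        obtain ⟨⟨t, s, s'⟩, ⟨t', u, u'⟩⟩ := x
        obtain ⟨⟨a, c, c'⟩, ⟨a', d, d'⟩⟩ := y
        simp only [Prod.mk.injEq, bavA, bavB] at hxy ⊢
        omega)
      (fun x hx => by
        simp only [bavT, Finset.mem_product, Finset.mem_Icc] at hx ⊢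
        tauto)
      (fun x _ => rfl)
    calc ∑ x ∈ bavT N b ×ˢ bavT N b, |cum4 P (X 0) (X (bavB x.1 - bavA x.1))
          (X (bavA x.2 - bavA x.1)) (X (bavB x.2 - bavA x.1))|
        ≤ ((Finset.Icc 1 N ×ˢ (Finset.Icc 1 b ×ˢ Finset.Icc 1 b)).card : ℝ) * Cu := h
      _ = ((N * (b * b) : ℕ) : ℝ) * Cu := by
          simp [Finset.card_product, Nat.card_Icc]
  have hS1 : ∑ x ∈ bavT N b ×ˢ bavT N b,
      |γ (bavA x.2 - bavA x.1)| * |γ (bavB x.2 - bavB x.1)|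
      ≤ ((N * (b * (b * b)) : ℕ) : ℝ) * (Γ * Γ) := by
    have h := bav_count (bavT N b ×ˢ bavT N b)
      (fun x => |γ (bavA x.2 - bavA x.1)| * |γ (bavB x.2 - bavB x.1)|)
      (fun z : ℤ × ℤ => |γ z.1| * |γ z.2|)
      (fun z => mul_nonneg (abs_nonneg _) (abs_nonneg _)) hFs2
      (Finset.Icc 1 N ×ˢ (Finset.Icc 1 b ×ˢ (Finset.Icc 1 b ×ˢ Finset.Icc 1 b)))
      (fun x => ((x.1.1, x.1.2.1, x.1.2.2, x.2.2.1),
        (bavA x.2 - bavA x.1, bavB x.2 - bavB x.1)))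
      (fun x _ y _ hxy => by
        obtain ⟨⟨t, s, s'⟩, ⟨t', u, u'⟩⟩ := x
        obtain ⟨⟨a, c, c'⟩, ⟨a', d, d'⟩⟩ := y
        simp only [Prod.mk.injEq, bavA, bavB] at hxy ⊢
        omega)
      (fun x hx => by
        simp only [bavT, Finset.mem_product, Finset.mem_Icc] at hx ⊢
        tauto)
      (fun x _ => rfl)
    calc ∑ x ∈ bavT N b ×ˢ bavT N b, |γ (bavA x.2 - bavA x.1)| * |γ (bavB x.2 - bavB x.1)|
        ≤ ((Finset.Icc 1 N ×ˢ (Finset.Icc 1 b ×ˢ (Finset.Icc 1 b ×ˢ Finset.Icc 1 b))).card : ℝ)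
            * ∑' z : ℤ × ℤ, |γ z.1| * |γ z.2| := h
      _ = ((N * (b * (b * b)) : ℕ) : ℝ) * (Γ * Γ) := by
          rw [htsum2]; simp [Finset.card_product, Nat.card_Icc]
  have hS2 : ∑ x ∈ bavT N b ×ˢ bavT N b,
      |γ (bavB x.2 - bavA x.1)| * |γ (bavA x.2 - bavB x.1)|
      ≤ ((N * (b * (b * b)) : ℕ) : ℝ) * (Γ * Γ) := by
    have h := bav_count (bavT N b ×ˢ bavT N b)
      (fun x => |γ (bavB x.2 - bavA x.1)| * |γ (bavA x.2 - bavB x.1)|)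
      (fun z : ℤ × ℤ => |γ z.1| * |γ z.2|)
      (fun z => mul_nonneg (abs_nonneg _) (abs_nonneg _)) hFs2
      (Finset.Icc 1 N ×ˢ (Finset.Icc 1 b ×ˢ (Finset.Icc 1 b ×ˢ Finset.Icc 1 b)))
      (fun x => ((x.1.1, x.1.2.1, x.1.2.2, x.2.2.2),
        (bavB x.2 - bavA x.1, bavA x.2 - bavB x.1)))
      (fun x _ y _ hxy => by
        obtain ⟨⟨t, s, s'⟩, ⟨t', u, u'⟩⟩ := x
        obtain ⟨⟨a, c, c'⟩, ⟨a', d, d'⟩⟩ := y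
        simp only [Prod.mk.injEq, bavA, bavB] at hxy ⊢
        omega)
      (fun x hx => by
        simp only [bavT, Finset.mem_product, Finset.mem_Icc] at hx ⊢
        tauto)
      (fun x _ => rfl)
    calc ∑ x ∈ bavT N b ×ˢ bavT N b, |γ (bavB x.2 - bavA x.1)| * |γ (bavA x.2 - bavB x.1)|
        ≤ ((Finset.Icc 1 N ×ˢ (Finset.Icc 1 b ×ˢ (Finset.Icc 1 b ×ˢ Finset.Icc 1 b))).card : ℝ)
            * ∑' z : ℤ × ℤ, |γ z.1| * |γ z.2| := h
      _ = ((N * (b * (b * b)) : ℕ) : ℝ) * (Γ * Γ) := by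
          rw [htsum2]; simp [Finset.card_product, Nat.card_Icc]
  -- assembly
  have hN1 : (1 : ℝ) ≤ (N : ℝ) := by exact_mod_cast hN
  have hb1 : (1 : ℝ) ≤ (b : ℝ) := by exact_mod_cast hb
  have hπ := Real.pi_pos
  calc variance (fun ω => ∑ p ∈ bavT N b, bavW N b lam p * bavZ X p ω) P
      = ∑ p ∈ bavT N b, ∑ q ∈ bavT N b, bavW N b lam p * bavW N b lam q *
          ((∫ ω, bavZ X p ω * bavZ X q ω ∂P)
            - (∫ ω, bavZ X p ω ∂P) * (∫ ω, bavZ X q ω ∂P)) := hVar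
    _ ≤ ∑ p ∈ bavT N b, ∑ q ∈ bavT N b, 4 * A0 ^ 2 *
          (|cum4 P (X 0) (X (bavB p - bavA p)) (X (bavA q - bavA p)) (X (bavB q - bavA p))|
            + |γ (bavA q - bavA p)| * |γ (bavB q - bavB p)|
            + |γ (bavB q - bavA p)| * |γ (bavA q - bavB p)|) :=
        Finset.sum_le_sum fun p _ => Finset.sum_le_sum fun q _ => hterm p q
    _ = ∑ x ∈ bavT N b ×ˢ bavT N b, 4 * A0 ^ 2 *
          (|cum4 P (X 0) (X (bavB x.1 - bavA x.1)) (X (bavA x.2 - bavA x.1))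
              (X (bavB x.2 - bavA x.1))|
            + |γ (bavA x.2 - bavA x.1)| * |γ (bavB x.2 - bavB x.1)|
            + |γ (bavB x.2 - bavA x.1)| * |γ (bavA x.2 - bavB x.1)|) :=
        (Finset.sum_product' (s := bavT N b) (t := bavT N b)
          (f := fun p q => 4 * A0 ^ 2 *
            (|cum4 P (X 0) (X (bavB p - bavA p)) (X (bavA q - bavA p)) (X (bavB q - bavA p))|
              + |γ (bavA q - bavA p)| * |γ (bavB q - bavB p)|
              + |γ (bavB q - bavA p)| * |γ (bavA q - bavB p)|))).symm ▸ rfl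
    _ = 4 * A0 ^ 2 * ((∑ x ∈ bavT N b ×ˢ bavT N b,
            |cum4 P (X 0) (X (bavB x.1 - bavA x.1)) (X (bavA x.2 - bavA x.1))
              (X (bavB x.2 - bavA x.1))|)
          + (∑ x ∈ bavT N b ×ˢ bavT N b,
              |γ (bavA x.2 - bavA x.1)| * |γ (bavB x.2 - bavB x.1)|)
          + (∑ x ∈ bavT N b ×ˢ bavT N b,
              |γ (bavB x.2 - bavA x.1)| * |γ (bavA x.2 - bavB x.1)|)) := by
        rw [← Finset.mul_sum, Finset.sum_add_distrib, Finset.sum_add_distrib]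
    _ ≤ 4 * A0 ^ 2 * (((N * (b * b) : ℕ) : ℝ) * Cu
          + ((N * (b * (b * b)) : ℕ) : ℝ) * (Γ * Γ)
          + ((N * (b * (b * b)) : ℕ) : ℝ) * (Γ * Γ)) := by
        apply mul_le_mul_of_nonneg_left (add_le_add (add_le_add hS3 hS1) hS2) (by positivity)
    _ ≤ ((2 * Γ ^ 2 + Cu) / π ^ 2) * b / N := by
        push_cast
        rw [hA0]
        have hN0 : (0:ℝ) < (N : ℝ) := lt_of_lt_of_le one_pos hN1
        have hb0 : (0:ℝ) < (b : ℝ) := lt_of_lt_of_le one_pos hb1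
        have h1 : 4 * ((1 / (N:ℝ)) * (1 / (2 * π * (b:ℝ)))) ^ 2 *
            ((N:ℝ) * ((b:ℝ) * (b:ℝ)) * Cu + (N:ℝ) * ((b:ℝ) * ((b:ℝ) * (b:ℝ))) * (Γ * Γ)
              + (N:ℝ) * ((b:ℝ) * ((b:ℝ) * (b:ℝ))) * (Γ * Γ))
            = (Cu + 2 * (b:ℝ) * Γ ^ 2) / ((N:ℝ) * π ^ 2) := by
          field_simp
          ring
        have h2 : ((2 * Γ ^ 2 + Cu) / π ^ 2) * (b:ℝ) / (N:ℝ)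
            = ((2 * Γ ^ 2 + Cu) * (b:ℝ)) / ((N:ℝ) * π ^ 2) := by
          rw [div_mul_eq_mul_div, div_div, mul_comm (π ^ 2) ((N:ℝ))]
        rw [h1, h2]
        gcongr
        nlinarith [mul_nonneg hCu0 (sub_nonneg.2 hb1)]

/-- Variance bound for the Bartlett average `f̃_b(λ)` of the periodograms of
the `N = n − b + 1` overlapping subsamples of length `b`:
`Var(f̃_b(λ)) ≤ C b / N` uniformly in `λ`. -/
theorem bartlett_average_variance_bound
    {Ω : Type*} [MeasurableSpace Ω] (P : Measure Ω) [IsProbabilityMeasure P]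
    (X : ℤ → Ω → ℝ) (hmeas : ∀ t, Measurable (X t))
    (hstat : ∀ (m : ℕ) (t : Fin m → ℤ) (s : ℤ),
      Measure.map (fun ω (i : Fin m) => X (t i + s) ω) P
        = Measure.map (fun ω (i : Fin m) => X (t i) ω) P)
    (hmean : ∫ ω, X 0 ω ∂P = 0)
    (hmom : Integrable (fun ω => (X 0 ω) ^ 4) P)
    (γ : ℤ → ℝ) (hγ : ∀ t h : ℤ, ∫ ω, X t ω * X (t + h) ω ∂P = γ h)
    (hγsum : Summable (fun h : ℤ => |γ h|))
    (hcumsum : Summable (fun h : ℤ × ℤ × ℤ =>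
      |cum4 P (X 0) (X h.1) (X h.2.1) (X h.2.2)|)) :
    ∃ C : ℝ, ∀ b n : ℕ, 1 ≤ b → b ≤ n → ∀ lam : ℝ,
      variance (fun ω =>
        (1 / ((n - b + 1 : ℕ) : ℝ)) * ∑ t ∈ Finset.Icc 1 (n - b + 1),
          (1 / (2 * π * b)) *
            ‖∑ s ∈ Finset.Icc 1 b,
              (X ((t : ℤ) + (s : ℤ) - 1) ω : ℂ) *
                Complex.exp (-Complex.I * lam * (s : ℕ))‖ ^ 2) P
        ≤ C * b / ((n - b + 1 : ℕ) : ℝ) := by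
  refine ⟨(2 * (∑' h : ℤ, |γ h|) ^ 2
      + ∑' h : ℤ × ℤ × ℤ, |cum4 P (X 0) (X h.1) (X h.2.1) (X h.2.2)|) / π ^ 2, ?_⟩
  intro b n hb hbn lam
  rw [bav_bridge X n b lam]
  exact bav_main P X hmeas hstat hmom γ hγ hγsum hcumsum b (n - b + 1) hb
    (Nat.le_add_left 1 _) lam
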